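/- Every quasi-Polish space is a Wilker space: for all open sets U₁, U₂ and every compact set K with K ⊆ U₁ ∪ U₂, there exist compact sets K₁ ⊆ U₁ and K₂ ⊆ U₂ with K ⊆ K₁ ∪ K₂. -/

import Mathlib

open Set Topology

/-- The lower powerspace: closed subsets of `X`. -/
def LowerPS (X : Type*) [TopologicalSpace X] : Type _ := {A : Set X // IsClosed A}

/-- Lower Vietoris topology, generated by the sets `◇U = {A | A ∩ U ≠ ∅}` for `U` open. -/
instance (X : Type*) [TopologicalSpace X] : TopologicalSpace (LowerPS X) :=
  .generateFrom {S | ∃ U : Set X, IsOpen U ∧ S = {A : LowerPS X | (A.1 ∩ U).Nonempty}}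

/-- The upper powerspace: compact saturated subsets of `X`
(saturated = intersection of all open neighborhoods). -/
def UpperPS (X : Type*) [TopologicalSpace X] : Type _ :=
  {K : Set X // IsCompact K ∧ K = ⋂₀ {U : Set X | IsOpen U ∧ K ⊆ U}}

/-- Upper Vietoris topology, generated by the sets `□U = {K | K ⊆ U}` for `U` open. -/
instance (X : Type*) [TopologicalSpace X] : TopologicalSpace (UpperPS X) :=
  .generateFrom {S | ∃ U : Set X, IsOpen U ∧ S = {K : UpperPS X | K.1 ⊆ U}}

/-- A `Π⁰₂` subset. -/
def IsPi02 {Y : Type*} [TopologicalSpace Y] (S : Set Y) : Prop :=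
  ∃ U V : ℕ → Set Y, (∀ i, IsOpen (U i)) ∧ (∀ i, IsOpen (V i)) ∧
    ∀ y, y ∈ S ↔ ∀ i, y ∈ U i → y ∈ V i

/-- The Scott topology on `P(ω)`, generated by the sets `{x | F ⊆ x}` for finite `F`. -/
instance : TopologicalSpace (Set ℕ) :=
  .generateFrom {S | ∃ F : Finset ℕ, S = {x : Set ℕ | ↑F ⊆ x}}

/-- A space is quasi-Polish iff it is homeomorphic to a `Π⁰₂` subspace of `P(ω)`
with the Scott topology. -/
def QuasiPolish (X : Type*) [TopologicalSpace X] : Prop :=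
  ∃ S : Set (Set ℕ), IsPi02 S ∧ Nonempty (X ≃ₜ S)

/-- Scott-open subsets of a preorder. -/
def IsScottOpen {α : Type*} [Preorder α] (U : Set α) : Prop :=
  (∀ ⦃a b : α⦄, a ≤ b → a ∈ U → b ∈ U) ∧
  ∀ d : Set α, d.Nonempty → DirectedOn (· ≤ ·) d → ∀ a : α, IsLUB d a → a ∈ U →
    (d ∩ U).Nonempty

/-- The Scott topology on a preorder. -/
def scottTop (α : Type*) [Preorder α] : TopologicalSpace α := .generateFrom {U | IsScottOpen U}

/-- The frame of open subsets of `X`, ordered by inclusion. -/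
def OpensT (X : Type*) [TopologicalSpace X] : Type _ := {U : Set X // IsOpen U}

instance (X : Type*) [TopologicalSpace X] : PartialOrder (OpensT X) :=
  inferInstanceAs (PartialOrder {U : Set X // IsOpen U})

/-- `O(X)` carries the Scott topology. -/
instance (X : Type*) [TopologicalSpace X] : TopologicalSpace (OpensT X) := scottTop (OpensT X)

/-- `□◇U` in `K(A(X))`. -/
def boxDia {X : Type*} [TopologicalSpace X] (U : Set X) : Set (UpperPS (LowerPS X)) :=
  {𝒦 | ∀ A ∈ 𝒦.1, ((A : LowerPS X).1 ∩ U).Nonempty}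

/-- `◇□U` in `A(K(X))`. -/
def diaBox {X : Type*} [TopologicalSpace X] (U : Set X) : Set (LowerPS (UpperPS X)) :=
  {𝒜 | ∃ K ∈ 𝒜.1, (K : UpperPS X).1 ⊆ U}

/-- A space is consonant iff every Scott-open family of opens containing `U` contains
a compact-saturated filter neighborhood `▽K` of `U`. -/
def Consonant (X : Type*) [TopologicalSpace X] : Prop :=
  ∀ H : Set (OpensT X), IsScottOpen H → ∀ U ∈ H,
    ∃ K : UpperPS X, K.1 ⊆ U.1 ∧ ∀ V : OpensT X, K.1 ⊆ V.1 → V ∈ H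

/-- A space is co-consonant. -/
def CoConsonant (Y : Type*) [TopologicalSpace Y] : Prop :=
  ∀ H : Set (OpensT Y), IsScottOpen H → ∀ U ∈ H,
    ∃ F : Finset (Set Y), (∀ A ∈ F, IsClosed A) ∧ (∀ A ∈ F, (U.1 ∩ A).Nonempty) ∧
      ∀ V : OpensT Y, (∀ A ∈ F, (V.1 ∩ A).Nonempty) → V ∈ H


namespace QPWaux


def Up (F : Finset ℕ) : Set (Set ℕ) := {x | ↑F ⊆ x}

lemma isOpen_Up (F : Finset ℕ) : IsOpen (Up F) :=
  TopologicalSpace.GenerateOpen.basic _ ⟨F, rfl⟩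

lemma isOpen_iff {W : Set (Set ℕ)} :
    IsOpen W ↔ ∀ x ∈ W, ∃ F : Finset ℕ, ↑F ⊆ x ∧ Up F ⊆ W := by
  constructor
  · intro h
    have h' : TopologicalSpace.GenerateOpen
        {S | ∃ F : Finset ℕ, S = {x : Set ℕ | ↑F ⊆ x}} W := h
    clear h
    induction h' with
    | basic s hs =>
      obtain ⟨F, rfl⟩ := hs
      exact fun x hx => ⟨F, hx, fun y hy => hy⟩
    | univ => exact fun x _ => ⟨∅, by simp, fun y _ => trivial⟩
    | inter s t _ _ ihs iht =>
      intro x hx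
      obtain ⟨F, hF, hFs⟩ := ihs x hx.1
      obtain ⟨G, hG, hGt⟩ := iht x hx.2
      refine ⟨F ∪ G, ?_, ?_⟩
      · intro a ha
        rcases Finset.mem_union.1 (Finset.mem_coe.1 ha) with h | h
        · exact hF (Finset.mem_coe.2 h)
        · exact hG (Finset.mem_coe.2 h)
      · intro y hy
        have hy' : ↑(F ∪ G) ⊆ y := hy
        constructor
        · exact hFs (fun a ha => hy' (by simp [Finset.mem_coe.1 ha]))
        · exact hGt (fun a ha => hy' (by simp [Finset.mem_coe.1 ha]))
    | sUnion S _ ih =>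
      intro x hx
      obtain ⟨s, hsS, hxs⟩ := hx
      obtain ⟨F, h1, h2⟩ := ih s hsS x hxs
      exact ⟨F, h1, h2.trans (subset_sUnion_of_mem hsS)⟩
  · intro h
    have : W = ⋃₀ {u | (∃ F : Finset ℕ, u = Up F) ∧ u ⊆ W} := by
      apply Subset.antisymm
      · intro x hx
        obtain ⟨F, h1, h2⟩ := h x hx
        exact ⟨Up F, ⟨⟨F, rfl⟩, h2⟩, h1⟩
      · intro x hx
        obtain ⟨u, ⟨_, hu⟩, hxu⟩ := hx
        exact hu hxu
    rw [this]
    exact isOpen_sUnion (fun u hu => hu.1.elim fun F hF => hF ▸ isOpen_Up F)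

lemma mem_of_open_subset {W : Set (Set ℕ)} (hW : IsOpen W) {x y : Set ℕ}
    (hx : x ∈ W) (hxy : x ⊆ y) : y ∈ W := by
  obtain ⟨F, h1, h2⟩ := isOpen_iff.1 hW x hx
  exact h2 (h1.trans hxy)



lemma exists_seq {α : Type*} (P : ℕ → α → Prop) (R : ℕ → α → α → Prop)
    (h0 : ∃ a, P 0 a) (hstep : ∀ n a, P n a → ∃ b, R n a b ∧ P (n+1) b) :
    ∃ g : ℕ → α, (∀ n, P n (g n)) ∧ ∀ n, R n (g n) (g (n+1)) := by
  choose f hf1 hf2 using hstep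
  let g : ∀ _ : ℕ, {a // P _ a} := fun n =>
    Nat.rec (motive := fun n => {a // P n a}) ⟨h0.choose, h0.choose_spec⟩ (fun n p => ⟨f n p.1 p.2, hf2 n p.1 p.2⟩) n
  exact ⟨fun n => (g n).1, fun n => (g n).2, fun n => hf1 n (g n).1 (g n).2⟩

/-- König's lemma for finitely branching level structures. -/
lemma konig {α : Type*} (L : ℕ → Finset α) (R : ℕ → α → α → Prop)
    (hne : ∀ n, (L n).Nonempty)
    (hpred : ∀ n, ∀ b ∈ L (n+1), ∃ a ∈ L n, R n a b) :
    ∃ f : ℕ → α, (∀ n, f n ∈ L n) ∧ ∀ n, R n (f n) (f (n+1)) := by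
  classical
  set Ch : ℕ → ℕ → (ℕ → α) → Prop := fun n m g =>
    (∀ k, n ≤ k → k ≤ m → g k ∈ L k) ∧ (∀ k, n ≤ k → k + 1 ≤ m → R k (g k) (g (k+1))) with hCh
  set Ext : ℕ → α → Prop := fun n a => ∀ m, ∃ g, g n = a ∧ Ch n m g with hExt
  -- chains can be restricted
  have hmono : ∀ n m m' g, m ≤ m' → Ch n m' g → Ch n m g := by
    rintro n m m' g hmm ⟨h1, h2⟩
    exact ⟨fun k hk1 hk2 => h1 k hk1 (hk2.trans hmm), fun k hk1 hk2 => h2 k hk1 (hk2.trans hmm)⟩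
  -- downward walk: every node has an ancestor chain
  have down : ∀ m n, n ≤ m → ∀ b ∈ L m, ∃ g, g m = b ∧ Ch n m g := by
    intro m
    induction m with
    | zero =>
      intro n _ b hb
      refine ⟨fun _ => b, rfl, fun k hk1 hk2 => ?_, fun k _ hk2 => by omega⟩
      have : k = 0 := by omega
      subst this; exact hb
    | succ m ih =>
      intro n hn b hb
      obtain ⟨a, ha, hR⟩ := hpred m b hb
      by_cases h : n ≤ m
      · obtain ⟨g, hg, hg1, hg2⟩ := ih n h a ha
        refine ⟨Function.update g (m+1) b, Function.update_self _ _ _, ?_, ?_⟩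
        · intro k hk1 hk2
          by_cases hk : k = m + 1
          · subst hk; simpa using hb
          · rw [Function.update_of_ne hk]
            exact hg1 k hk1 (by omega)
        · intro k hk1 hk2
          by_cases hk : k = m
          · subst hk
            rw [Function.update_of_ne (by omega), Function.update_self, hg]
            exact hR
          · rw [Function.update_of_ne (by omega), Function.update_of_ne (by omega)]
            exact hg2 k hk1 (by omega)
      · have hnm : n = m + 1 := by omega
        subst hnm
        refine ⟨fun _ => b, rfl, fun k hk1 hk2 => ?_, fun k hk1 hk2 => by omega⟩
        have : k = m + 1 := by omega
        subst this; exact hb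
  -- a good root exists
  have start : ∃ a, a ∈ L 0 ∧ Ext 0 a := by
    by_contra hcon
    push_neg at hcon
    have hcon' : ∀ a ∈ L 0, ∃ m, ¬ ∃ g, g 0 = a ∧ Ch 0 m g := by
      intro a ha
      rcases (em (a ∈ L 0)) with _ | h
      · have := hcon a
        rw [hExt, not_forall] at this
        exact this ha
      · exact absurd ha h
    choose! m hm using hcon'
    set M := (L 0).sup m with hM
    obtain ⟨b, hb⟩ := hne M
    obtain ⟨g, hg, hch⟩ := down M 0 (Nat.zero_le _) b hb
    have ha0 : g 0 ∈ L 0 := hch.1 0 le_rfl (Nat.zero_le _)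
    exact hm (g 0) ha0 ⟨g, rfl, hmono 0 (m (g 0)) M g (Finset.le_sup ha0) hch⟩
  -- good nodes have good children
  have step : ∀ n a, (a ∈ L n ∧ Ext n a) →
      ∃ b, R n a b ∧ (b ∈ L (n+1) ∧ Ext (n+1) b) := by
    intro n a ⟨_, hExta⟩
    by_contra hcon
    push_neg at hcon
    have hcon' : ∀ b, R n a b → b ∈ L (n+1) → ∃ m, ¬ ∃ g, g (n+1) = b ∧ Ch (n+1) m g := by
      intro b hRb hbL
      have := hcon b hRb hbL
      rw [hExt, not_forall] at this
      exact this
    set C := (L (n+1)).filter (fun b => R n a b) with hC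
    have hcon'' : ∀ b ∈ C, ∃ m, ¬ ∃ g, g (n+1) = b ∧ Ch (n+1) m g := by
      intro b hb
      rw [hC, Finset.mem_filter] at hb
      exact hcon' b hb.2 hb.1
    choose! m hm using hcon''
    set M := max (n+1) (C.sup m) with hMdef
    obtain ⟨g, hg, hch⟩ := hExta M
    have hb1 : g (n+1) ∈ L (n+1) := hch.1 (n+1) (by omega) (by omega)
    have hb2 : R n a (g (n+1)) := by
      have := hch.2 n le_rfl (by omega)
      rwa [hg] at this
    have hbC : g (n+1) ∈ C := by rw [hC, Finset.mem_filter]; exact ⟨hb1, hb2⟩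
    refine hm (g (n+1)) hbC ⟨g, rfl, ?_⟩
    have hle : m (g (n+1)) ≤ M := le_trans (Finset.le_sup hbC) (le_max_right _ _)
    exact hmono (n+1) (m (g (n+1))) M g hle
      ⟨fun k hk1 hk2 => hch.1 k (by omega) hk2, fun k hk1 hk2 => hch.2 k (by omega) hk2⟩
  obtain ⟨f, hf1, hf2⟩ := exists_seq (fun n a => a ∈ L n ∧ Ext n a) R start step
  exact ⟨f, fun n => (hf1 n).1, hf2⟩


theorem key (S : Set (Set ℕ)) (A B : ℕ → Set (Set ℕ))
    (hA : ∀ i, IsOpen (A i)) (hB : ∀ i, IsOpen (B i))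
    (hS : ∀ y, y ∈ S ↔ ∀ i, y ∈ A i → y ∈ B i)
    (V : Bool → Set (Set ℕ)) (hV : ∀ c, IsOpen (V c))
    (K : Set (Set ℕ)) (hK : IsCompact K) (hKS : K ⊆ S)
    (hKV : K ⊆ V true ∪ V false) :
    ∃ K₁ K₂ : Set (Set ℕ), IsCompact K₁ ∧ IsCompact K₂ ∧
      K₁ ⊆ S ∩ V true ∧ K₂ ⊆ S ∩ V false ∧ K ⊆ K₁ ∪ K₂ := by
  classical
  -- existence of the initial level
  have ex0 : ∃ l : Finset (Finset ℕ × Bool),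
      (∀ x ∈ K, ∃ p ∈ l, ↑p.1 ⊆ x) ∧ (∀ p ∈ l, Up p.1 ⊆ V p.2) := by
    have h1 : ∀ x : ↥K, ∃ (F : Finset ℕ) (c : Bool), ↑F ⊆ (x : Set ℕ) ∧ Up F ⊆ V c := by
      intro x
      rcases hKV x.2 with hx | hx
      · obtain ⟨F, hF1, hF2⟩ := isOpen_iff.1 (hV true) _ hx; exact ⟨F, true, hF1, hF2⟩
      · obtain ⟨F, hF1, hF2⟩ := isOpen_iff.1 (hV false) _ hx; exact ⟨F, false, hF1, hF2⟩
    choose Ff cf hf1 hf2 using h1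
    obtain ⟨t, ht⟩ := hK.elim_finite_subcover (fun x : ↥K => Up (Ff x))
      (fun x => isOpen_Up _) (fun z hz => Set.mem_iUnion.2 ⟨⟨z, hz⟩, hf1 ⟨z, hz⟩⟩)
    refine ⟨t.image (fun x => (Ff x, cf x)), ?_, ?_⟩
    · intro z hz
      obtain ⟨x, hx, hzx⟩ := Set.mem_iUnion₂.1 (ht hz)
      exact ⟨(Ff x, cf x), Finset.mem_image_of_mem _ hx, hzx⟩
    · intro p hp
      obtain ⟨x, _, rfl⟩ := Finset.mem_image.1 hp
      exact hf2 x
  -- existence of level refinements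
  have exstep : ∀ (n : ℕ) (l : Finset (Finset ℕ × Bool)), (∀ x ∈ K, ∃ p ∈ l, ↑p.1 ⊆ x) →
      ∃ l' : Finset (Finset ℕ × Bool), (∀ x ∈ K, ∃ p ∈ l', (↑p.1 : Set ℕ) ⊆ x) ∧
        (∀ q ∈ l', (∃ p ∈ l, p.1 ⊆ q.1 ∧ p.2 = q.2) ∧
          (∀ p ∈ l, ∀ i ≤ n, p.1 ⊆ q.1 → Up p.1 ⊆ A i → Up q.1 ⊆ B i)) := by
    intro n l hl
    have hwit : ∀ (x : ↥K) (p : Finset ℕ × Bool) (i : ℕ),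
        (↑p.1 ⊆ (x : Set ℕ) ∧ Up p.1 ⊆ A i) →
        ∃ H : Finset ℕ, ↑H ⊆ (x : Set ℕ) ∧ Up H ⊆ B i := by
      rintro x p i ⟨hp1, hp2⟩
      have hxB : (x : Set ℕ) ∈ B i := (hS _).1 (hKS x.2) i (hp2 hp1)
      exact isOpen_iff.1 (hB i) _ hxB
    choose! Hf hH1 hH2 using hwit
    have hbase : ∀ x : ↥K, ∃ p, p ∈ l ∧ ↑p.1 ⊆ (x : Set ℕ) := by
      intro x; obtain ⟨p, hp1, hp2⟩ := hl x x.2; exact ⟨p, hp1, hp2⟩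
    choose p0 hp0 using hbase
    set G : ↥K → Finset ℕ := fun x => (p0 x).1 ∪ (l ×ˢ Finset.range (n+1)).biUnion
        (fun pi => if (↑pi.1.1 ⊆ (x : Set ℕ) ∧ Up pi.1.1 ⊆ A pi.2) then Hf x pi.1 pi.2 else ∅)
      with hGdef
    have hGsub : ∀ x : ↥K, ↑(G x) ⊆ (x : Set ℕ) := by
      intro x a ha
      rcases Finset.mem_union.1 (Finset.mem_coe.1 ha) with h | h
      · exact (hp0 x).2 (Finset.mem_coe.2 h)
      · obtain ⟨pi, hpi, hmem⟩ := Finset.mem_biUnion.1 h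
        by_cases hc : (↑pi.1.1 ⊆ (x : Set ℕ) ∧ Up pi.1.1 ⊆ A pi.2)
        · rw [if_pos hc] at hmem
          exact hH1 x pi.1 pi.2 hc (Finset.mem_coe.2 hmem)
        · rw [if_neg hc] at hmem
          exact absurd hmem (Finset.notMem_empty a)
    obtain ⟨t, ht⟩ := hK.elim_finite_subcover (fun x : ↥K => Up (G x))
      (fun x => isOpen_Up _) (fun z hz => Set.mem_iUnion.2 ⟨⟨z, hz⟩, hGsub ⟨z, hz⟩⟩)
    refine ⟨t.image (fun x => (G x, (p0 x).2)), ?_, ?_⟩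
    · intro z hz
      obtain ⟨x, hx, hzx⟩ := Set.mem_iUnion₂.1 (ht hz)
      exact ⟨(G x, (p0 x).2), Finset.mem_image_of_mem _ hx, hzx⟩
    · intro q hq
      obtain ⟨x, _, rfl⟩ := Finset.mem_image.1 hq
      constructor
      · exact ⟨p0 x, (hp0 x).1, Finset.subset_union_left, rfl⟩
      · intro p hpl i hi hpq hpA
        have hcond : ↑p.1 ⊆ (x : Set ℕ) ∧ Up p.1 ⊆ A i :=
          ⟨(Finset.coe_subset.2 hpq).trans (hGsub x), hpA⟩
        have hHsub : Hf x p i ⊆ G x := by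
          intro a ha
          apply Finset.mem_union_right
          refine Finset.mem_biUnion.2 ⟨(p, i), ?_, ?_⟩
          · exact Finset.mem_product.2 ⟨hpl, Finset.mem_range.2 (by omega)⟩
          · rw [if_pos hcond]; exact ha
        intro z hz
        exact hH2 x p i hcond ((Finset.coe_subset.2 hHsub).trans hz)
  -- the levels
  obtain ⟨L, hLP, hLR⟩ := exists_seq
    (fun (n : ℕ) (l : Finset (Finset ℕ × Bool)) =>
      (∀ x ∈ K, ∃ p ∈ l, (↑p.1 : Set ℕ) ⊆ x) ∧ (n = 0 → ∀ p ∈ l, Up p.1 ⊆ V p.2))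
    (fun (n : ℕ) (l l' : Finset (Finset ℕ × Bool)) =>
      ∀ q ∈ l', (∃ p ∈ l, p.1 ⊆ q.1 ∧ p.2 = q.2) ∧
      (∀ p ∈ l, ∀ i ≤ n, p.1 ⊆ q.1 → Up p.1 ⊆ A i → Up q.1 ⊆ B i))
    ⟨ex0.choose, ex0.choose_spec.1, fun _ => ex0.choose_spec.2⟩
    (fun n l hl => by
      obtain ⟨l', h1, h2⟩ := exstep n l hl.1
      exact ⟨l', h2, h1, fun h => absurd h (Nat.succ_ne_zero n)⟩)
  have hcov : ∀ n, ∀ x ∈ K, ∃ p ∈ L n, (↑p.1 : Set ℕ) ⊆ x := fun n => (hLP n).1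
  have hroot : ∀ p ∈ L 0, Up p.1 ⊆ V p.2 := (hLP 0).2 rfl
  have hstep : ∀ n, ∀ q ∈ L (n+1), (∃ p ∈ L n, p.1 ⊆ q.1 ∧ p.2 = q.2) ∧
      (∀ p ∈ L n, ∀ i ≤ n, p.1 ⊆ q.1 → Up p.1 ⊆ A i → Up q.1 ⊆ B i) := hLR
  clear hLP hLR ex0 exstep
  -- branches and their limits
  set IsBr : (ℕ → Finset ℕ × Bool) → Prop := fun f =>
    (∀ n, f n ∈ L n) ∧ ∀ n, (f n).1 ⊆ (f (n+1)).1 ∧ (f n).2 = (f (n+1)).2 with hIsBr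
  set Lim : (ℕ → Finset ℕ × Bool) → Set ℕ := fun f => ⋃ n, ((f n).1 : Set ℕ) with hLim
  set Lc : Bool → Set (Set ℕ) := fun c => {y | ∃ f, IsBr f ∧ (f 0).2 = c ∧ y = Lim f} with hLc
  set Mc : Bool → Set (Set ℕ) :=
    fun c => {x | x ∈ K ∧ ∀ n, ∃ p ∈ L n, p.2 = c ∧ (↑p.1 : Set ℕ) ⊆ x} with hMc
  have brmono : ∀ f, IsBr f → ∀ k m, k ≤ m → (f k).1 ⊆ (f m).1 := by
    intro f hf k m hkm
    induction m, hkm using Nat.le_induction with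
    | base => exact Finset.Subset.refl _
    | succ m hm ih => exact ih.trans (hf.2 m).1
  have brlabel : ∀ f, IsBr f → ∀ n, (f n).2 = (f 0).2 := by
    intro f hf n
    induction n with
    | zero => rfl
    | succ n ih => rw [← (hf.2 n).2, ih]
  have brsub : ∀ f (n : ℕ), ((f n).1 : Set ℕ) ⊆ Lim f := by
    intro f n
    exact Set.subset_iUnion (fun n => ((f n).1 : Set ℕ)) n
  have brfin : ∀ f, IsBr f → ∀ F : Finset ℕ, ↑F ⊆ Lim f → ∃ n, F ⊆ (f n).1 := by
    intro f hf F hF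
    have h : ∀ a ∈ F, ∃ n, a ∈ (f n).1 := by
      intro a ha
      have := hF (Finset.mem_coe.2 ha)
      simpa [hLim, Set.mem_iUnion] using this
    choose! idx hidx using h
    refine ⟨F.sup idx, fun a ha => ?_⟩
    exact brmono f hf (idx a) (F.sup idx) (Finset.le_sup ha) (hidx a ha)
  -- limits of branches are in S
  have hLcS : ∀ c, Lc c ⊆ S := by
    rintro c y ⟨f, hbr, hc, rfl⟩
    rw [hS]
    intro i hyA
    obtain ⟨F, hF, hFA⟩ := isOpen_iff.1 (hA i) _ hyA
    obtain ⟨n₀, hn₀⟩ := brfin f hbr F hF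
    set n := max n₀ i with hn
    have h1 : F ⊆ (f n).1 := hn₀.trans (brmono f hbr n₀ n (le_max_left _ _))
    have h2 : Up (f n).1 ⊆ A i := fun z hz => hFA ((Finset.coe_subset.2 h1).trans hz)
    have h3 := (hstep n (f (n+1)) (hbr.1 (n+1))).2 (f n) (hbr.1 n) i
      (le_max_right _ _) (hbr.2 n).1 h2
    exact h3 (brsub f (n+1))
  have hLcV : ∀ c, Lc c ⊆ V c := by
    rintro c y ⟨f, hbr, hc, rfl⟩
    have := hroot (f 0) (hbr.1 0) (brsub f 0)
    rwa [hc] at this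
  have hMcSV : ∀ c, Mc c ⊆ S ∩ V c := by
    rintro c x ⟨hxK, hx⟩
    refine ⟨hKS hxK, ?_⟩
    obtain ⟨p, hp, hpc, hpx⟩ := hx 0
    have := hroot p hp hpx
    rwa [hpc] at this
  -- every point of Mc is above a limit
  have hMcUp : ∀ c, ∀ x ∈ Mc c, ∃ y ∈ Lc c, y ⊆ x := by
    rintro c x ⟨hxK, hx⟩
    obtain ⟨f, hf1, hf2⟩ := konig (α := Finset ℕ × Bool)
      (fun n => (L n).filter (fun p => p.2 = c ∧ (↑p.1 : Set ℕ) ⊆ x))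
      (fun _ p q => p.1 ⊆ q.1 ∧ p.2 = q.2)
      (by
        intro n
        obtain ⟨p, hp, hpc, hpx⟩ := hx n
        exact ⟨p, Finset.mem_filter.2 ⟨hp, hpc, hpx⟩⟩)
      (by
        intro n q hq
        rw [Finset.mem_filter] at hq
        obtain ⟨p, hp, hpq, hpc⟩ := (hstep n q hq.1).1
        refine ⟨p, Finset.mem_filter.2 ⟨hp, ?_, ?_⟩, hpq, hpc⟩
        · rw [hpc]; exact hq.2.1
        · exact (Finset.coe_subset.2 hpq).trans hq.2.2)
    have hbr : IsBr f := ⟨fun n => (Finset.mem_filter.1 (hf1 n)).1, hf2⟩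
    refine ⟨Lim f, ⟨f, hbr, (Finset.mem_filter.1 (hf1 0)).2.1, rfl⟩, ?_⟩
    exact Set.iUnion_subset (fun n => (Finset.mem_filter.1 (hf1 n)).2.2)
  -- K is covered by the two parts
  have hcover : K ⊆ (Lc true ∪ Mc true) ∪ (Lc false ∪ Mc false) := by
    intro x hxK
    set Sc : Bool → Set ℕ := fun c => {n | ∃ p ∈ L n, p.2 = c ∧ (↑p.1 : Set ℕ) ⊆ x} with hSc
    have hall : ∀ n, n ∈ Sc true ∨ n ∈ Sc false := by
      intro n
      obtain ⟨p, hp, hpx⟩ := hcov n x hxK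
      cases hb : p.2
      · exact Or.inr ⟨p, hp, hb, hpx⟩
      · exact Or.inl ⟨p, hp, hb, hpx⟩
    have hdown : ∀ c n, (n+1) ∈ Sc c → n ∈ Sc c := by
      rintro c n ⟨q, hq, hqc, hqx⟩
      obtain ⟨p, hp, hpq, hpc⟩ := (hstep n q hq).1
      exact ⟨p, hp, by rw [hpc]; exact hqc, (Finset.coe_subset.2 hpq).trans hqx⟩
    have hdown' : ∀ c m n, n ≤ m → m ∈ Sc c → n ∈ Sc c := by
      intro c m
      induction m with
      | zero =>
        intro n hn hm
        have : n = 0 := by omega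
        subst this; exact hm
      | succ m ih =>
        intro n hn hm
        by_cases h : n = m + 1
        · subst h; exact hm
        · exact ih n (by omega) (hdown c m hm)
    by_cases hT : ∀ n, n ∈ Sc true
    · exact Or.inl (Or.inr ⟨hxK, hT⟩)
    · push_neg at hT
      obtain ⟨n₁, hn₁⟩ := hT
      refine Or.inr (Or.inr ⟨hxK, fun m => ?_⟩)
      rcases hall (max m n₁) with h | h
      · exact absurd (hdown' true (max m n₁) n₁ (le_max_right _ _) h) hn₁
      · exact hdown' false (max m n₁) m (le_max_left _ _) h
  -- compactness
  have hcomp : ∀ c, IsCompact (Lc c ∪ Mc c) := by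
    intro c
    apply isCompact_of_finite_subcover
    intro ι Us hUo hcovU
    set FC : Set (Set ℕ) → Prop := fun D => ∃ t : Finset ι, D ⊆ ⋃ i ∈ t, Us i with hFC
    have FCU : ∀ (s : Finset (Finset ℕ × Bool)) (gf : (Finset ℕ × Bool) → Set (Set ℕ))
        (D : Set (Set ℕ)), (D ⊆ ⋃ p ∈ s, gf p) → (∀ p ∈ s, FC (gf p)) → FC D := by
      intro s gf D hD hall
      choose! tf htf using hall
      refine ⟨s.biUnion tf, fun y hy => ?_⟩
      obtain ⟨p, hp, hyp⟩ := Set.mem_iUnion₂.1 (hD hy)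
      obtain ⟨i, hi, hyi⟩ := Set.mem_iUnion₂.1 (htf p hp hyp)
      exact Set.mem_iUnion₂.2 ⟨i, Finset.mem_biUnion.2 ⟨p, hp, hi⟩, hyi⟩
    suffices hfc : FC (Lc c) by
      obtain ⟨t, ht⟩ := hfc
      refine ⟨t, fun z hz => ?_⟩
      rcases hz with hz | hz
      · exact ht hz
      · obtain ⟨y, hy, hyz⟩ := hMcUp c z hz
        obtain ⟨i, hi, hyi⟩ := Set.mem_iUnion₂.1 (ht hy)
        exact Set.mem_iUnion₂.2 ⟨i, hi, mem_of_open_subset (hUo i) hyi hyz⟩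
    by_contra hbad0
    -- tail sets
    set T : ℕ → (Finset ℕ × Bool) → Set (Set ℕ) := fun n p =>
      {y | ∃ f : ℕ → Finset ℕ × Bool, (∀ k, f k ∈ L (n+k)) ∧
        (∀ k, (f k).1 ⊆ (f (k+1)).1 ∧ (f k).2 = (f (k+1)).2) ∧ f 0 = p ∧
        y = ⋃ k, ((f k).1 : Set ℕ)} with hT
    have hTUp : ∀ n p, T n p ⊆ Up p.1 := by
      rintro n p y ⟨f, hf1, hf2, hf0, rfl⟩
      rw [← hf0]
      exact (Set.subset_iUnion (fun k => ((f k).1 : Set ℕ)) 0)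
    have hT1 : Lc c ⊆ ⋃ p ∈ (L 0).filter (fun p => p.2 = c), T 0 p := by
      rintro y ⟨f, hbr, hc0, rfl⟩
      refine Set.mem_iUnion₂.2 ⟨f 0, Finset.mem_filter.2 ⟨hbr.1 0, hc0⟩, f, ?_, hbr.2, rfl, rfl⟩
      intro k
      simpa using hbr.1 k
    have hT2 : ∀ n p, T n p ⊆
        ⋃ q ∈ (L (n+1)).filter (fun q => p.1 ⊆ q.1 ∧ p.2 = q.2), T (n+1) q := by
      rintro n p y ⟨f, hf1, hf2, hf0, rfl⟩
      have hq : f 1 ∈ L (n+1) := hf1 1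
      refine Set.mem_iUnion₂.2 ⟨f 1, Finset.mem_filter.2 ⟨hq, ?_, ?_⟩,
        fun k => f (k+1), ?_, fun k => hf2 (k+1), rfl, ?_⟩
      · rw [← hf0]; exact (hf2 0).1
      · rw [← hf0]; exact (hf2 0).2
      · intro k
        have := hf1 (k+1)
        have he : n + (k+1) = (n+1) + k := by omega
        rwa [he] at this
      · apply Set.Subset.antisymm
        · apply Set.iUnion_subset
          intro k
          cases k with
          | zero =>
            exact ((Finset.coe_subset.2 (hf2 0).1).trans
              (Set.subset_iUnion (fun k => ((f (k+1)).1 : Set ℕ)) 0))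
          | succ k' => exact Set.subset_iUnion (fun k => ((f (k+1)).1 : Set ℕ)) k'
        · exact Set.iUnion_subset (fun k => Set.subset_iUnion (fun k => ((f k).1 : Set ℕ)) (k+1))
    set Bad : ℕ → (Finset ℕ × Bool) → Prop :=
      fun n p => p ∈ L n ∧ p.2 = c ∧ ¬ FC (T n p) with hBad
    have hstart : ∃ p, Bad 0 p := by
      by_contra hno
      push_neg at hno
      apply hbad0
      apply FCU ((L 0).filter (fun p => p.2 = c)) (T 0) _ hT1
      intro p hp
      rw [Finset.mem_filter] at hp
      have := hno p
      rw [hBad] at this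
      simp only [not_and, not_not] at this
      exact this hp.1 hp.2
    have hbstep : ∀ n p, Bad n p → ∃ q, ((p.1 ⊆ q.1 ∧ p.2 = q.2) ∧ Bad (n+1) q) := by
      intro n p hp
      by_contra hno
      push_neg at hno
      apply hp.2.2
      apply FCU ((L (n+1)).filter (fun q => p.1 ⊆ q.1 ∧ p.2 = q.2)) (T (n+1)) _ (hT2 n p)
      intro q hq
      rw [Finset.mem_filter] at hq
      have := hno q ⟨hq.2.1, hq.2.2⟩
      rw [hBad] at this
      simp only [not_and, not_not] at this
      exact this hq.1 (by rw [← hq.2.2]; exact hp.2.1)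
    obtain ⟨g, hg1, hg2⟩ := exists_seq Bad (fun _ p q => p.1 ⊆ q.1 ∧ p.2 = q.2) hstart
      (fun n p h => by obtain ⟨q, hq⟩ := hbstep n p h; exact ⟨q, hq.1, hq.2⟩)
    have hbr : IsBr g := ⟨fun n => (hg1 n).1, hg2⟩
    have hyLc : Lim g ∈ Lc c := ⟨g, hbr, (hg1 0).2.1, rfl⟩
    obtain ⟨i, hyi⟩ := Set.mem_iUnion.1 (hcovU (Or.inl hyLc))
    obtain ⟨F, hF, hFU⟩ := isOpen_iff.1 (hUo i) _ hyi
    obtain ⟨n, hn⟩ := brfin g hbr F hF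
    apply (hg1 n).2.2
    refine ⟨{i}, fun z hz => ?_⟩
    have hz1 : z ∈ Up (g n).1 := hTUp n (g n) hz
    have hz2 : z ∈ Us i := hFU ((Finset.coe_subset.2 hn).trans hz1)
    simpa using hz2
  exact ⟨Lc true ∪ Mc true, Lc false ∪ Mc false, hcomp true, hcomp false,
    Set.union_subset (Set.subset_inter (hLcS true) (hLcV true)) (hMcSV true),
    Set.union_subset (Set.subset_inter (hLcS false) (hLcV false)) (hMcSV false),
    hcover⟩

end QPWaux

/-- Every quasi-Polish space is a Wilker space. -/
theorem quasiPolish_wilker (X : Type*) [TopologicalSpace X] (h : QuasiPolish X)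
    (U₁ U₂ K : Set X) (hU₁ : IsOpen U₁) (hU₂ : IsOpen U₂) (hK : IsCompact K)
    (hKU : K ⊆ U₁ ∪ U₂) :
    ∃ K₁ K₂ : Set X, IsCompact K₁ ∧ IsCompact K₂ ∧ K₁ ⊆ U₁ ∧ K₂ ⊆ U₂ ∧ K ⊆ K₁ ∪ K₂ := by
  classical
  obtain ⟨S, ⟨A, B, hA, hB, hS⟩, ⟨e⟩⟩ := h
  have hU1' : IsOpen (e '' U₁) := (e.isOpen_image).2 hU₁
  have hU2' : IsOpen (e '' U₂) := (e.isOpen_image).2 hU₂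
  obtain ⟨V₁, hV₁, hV₁e⟩ := isOpen_induced_iff.1 hU1'
  obtain ⟨V₂, hV₂, hV₂e⟩ := isOpen_induced_iff.1 hU2'
  set Vb : Bool → Set (Set ℕ) := fun c => if c then V₁ else V₂ with hVb
  have hVbo : ∀ c, IsOpen (Vb c) := by intro c; cases c <;> simpa [hVb]
  set K' : Set (Set ℕ) := (↑) '' (e '' K) with hK'def
  have hK' : IsCompact K' := (hK.image e.continuous).image continuous_subtype_val
  have hK'S : K' ⊆ S := by rintro _ ⟨z, _, rfl⟩; exact z.2
  have hK'V : K' ⊆ Vb true ∪ Vb false := by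
    rintro _ ⟨z, ⟨x, hxK, rfl⟩, rfl⟩
    rcases hKU hxK with hx | hx
    · left
      have : e x ∈ (↑) ⁻¹' V₁ := hV₁e ▸ Set.mem_image_of_mem _ hx
      simpa [hVb] using this
    · right
      have : e x ∈ (↑) ⁻¹' V₂ := hV₂e ▸ Set.mem_image_of_mem _ hx
      simpa [hVb] using this
  obtain ⟨K₁', K₂', hc1, hc2, hs1, hs2, hcov⟩ :=
    QPWaux.key S A B hA hB hS Vb hVbo K' hK' hK'S hK'V
  have himg : ∀ (T : Set (Set ℕ)), T ⊆ S →
      Subtype.val '' ((Subtype.val : S → Set ℕ) ⁻¹' T) = T := by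
    intro T hT
    apply Set.image_preimage_eq_of_subset
    rw [Subtype.range_coe]; exact hT
  have hQ1 : IsCompact ((Subtype.val : S → Set ℕ) ⁻¹' K₁') := by
    rw [Topology.IsEmbedding.subtypeVal.isCompact_iff, himg _ (hs1.trans Set.inter_subset_left)]
    exact hc1
  have hQ2 : IsCompact ((Subtype.val : S → Set ℕ) ⁻¹' K₂') := by
    rw [Topology.IsEmbedding.subtypeVal.isCompact_iff, himg _ (hs2.trans Set.inter_subset_left)]
    exact hc2
  refine ⟨e.symm '' ((Subtype.val : S → Set ℕ) ⁻¹' K₁'),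
    e.symm '' ((Subtype.val : S → Set ℕ) ⁻¹' K₂'),
    hQ1.image e.symm.continuous, hQ2.image e.symm.continuous, ?_, ?_, ?_⟩
  · rintro _ ⟨q, hq, rfl⟩
    have : (q : Set ℕ) ∈ V₁ := by
      have := (hs1 hq).2; simpa [hVb] using this
    have hq' : q ∈ e '' U₁ := by rw [← hV₁e]; exact this
    obtain ⟨u, hu, rfl⟩ := hq'
    simpa using hu
  · rintro _ ⟨q, hq, rfl⟩
    have : (q : Set ℕ) ∈ V₂ := by
      have := (hs2 hq).2; simpa [hVb] using this
    have hq' : q ∈ e '' U₂ := by rw [← hV₂e]; exact this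
    obtain ⟨u, hu, rfl⟩ := hq'
    simpa using hu
  · intro x hx
    have hx' : (↑(e x) : Set ℕ) ∈ K' := ⟨e x, Set.mem_image_of_mem _ hx, rfl⟩
    rcases hcov hx' with hm | hm
    · left; exact ⟨e x, hm, e.symm_apply_apply x⟩
    · right; exact ⟨e x, hm, e.symm_apply_apply x⟩
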